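/- For z ∈ Ĩ_n, ℓ(z) = ℓ'(z) if and only if z is a product of commuting simple generators, i.e., z = s_{i₁}s_{i₂}⋯s_{i_l} for distinct indices satisfying i_j ≢ i_k ± 1 (mod n) for all j, k. -/

import Mathlib

open Finset

/-- `w` is an element of the affine symmetric group `S̃_n`: a bijection `ℤ → ℤ` with
`w (i + n) = w i + n` for all `i` and `∑_{i=1}^n w i = n (n+1)/2`. -/
def IsAffine (n : ℕ) (w : Equiv.Perm ℤ) : Prop :=
  (∀ i : ℤ, w (i + n) = w i + n) ∧ ∑ i ∈ Finset.Icc (1 : ℤ) (n : ℤ), (w i - i) = 0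

/-- The Coxeter length of `w ∈ S̃_n`: the number of inversions `(i, j)`, `i < j`,
`w i > w j`, counted up to the equivalence `(i,j) ∼ (i+n, j+n)` (representatives with
`i ∈ [n]`). -/
noncomputable def affLen (n : ℕ) (w : Equiv.Perm ℤ) : ℕ :=
  Nat.card {p : ℤ × ℤ // 1 ≤ p.1 ∧ p.1 ≤ (n : ℤ) ∧ p.1 < p.2 ∧ w p.2 < w p.1}

/-- The absolute length of an involution `z ∈ Ĩ_n`: the number of 2-cycles
`(i, j)` with `i < j = z i`, counted up to the equivalence `(i,j) ∼ (i+n, j+n)`. -/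
noncomputable def absLen (n : ℕ) (z : Equiv.Perm ℤ) : ℕ :=
  Nat.card {p : ℤ × ℤ // 1 ≤ p.1 ∧ p.1 ≤ (n : ℤ) ∧ p.1 < p.2 ∧ z p.1 = p.2}

/-- The underlying function of the reflection `t_{i j}`: it sends `i + m n ↦ j + m n` and
`j + m n ↦ i + m n` for all `m`, fixing everything else. -/
def tFun (n : ℕ) (i j x : ℤ) : ℤ :=
  if (n : ℤ) ∣ x - i then x + (j - i) else if (n : ℤ) ∣ x - j then x - (j - i) else x

theorem tFun_comp (n : ℕ) (i j x : ℤ) : tFun n j i (tFun n i j x) = x := by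
  unfold tFun
  by_cases h1 : (n : ℤ) ∣ x - i
  · rw [if_pos h1]
    have c1 : (n : ℤ) ∣ x + (j - i) - j := by
      have e : x + (j - i) - j = x - i := by ring
      rw [e]; exact h1
    rw [if_pos c1]; ring
  · rw [if_neg h1]
    by_cases h2 : (n : ℤ) ∣ x - j
    · rw [if_pos h2]
      have c1 : ¬ (n : ℤ) ∣ x - (j - i) - j := by
        intro hc
        apply h1
        have e : x - i = 2 * (x - j) - (x - (j - i) - j) := by ring
        rw [e]
        exact dvd_sub (Dvd.dvd.mul_left h2 2) hc
      have c2 : (n : ℤ) ∣ x - (j - i) - i := by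
        have e : x - (j - i) - i = x - j := by ring
        rw [e]; exact h2
      rw [if_neg c1, if_pos c2]; ring
    · simp only [if_neg h1, if_neg h2]

/-- The reflection `t_{i j} ∈ S̃_n`. -/
def tPerm (n : ℕ) (i j : ℤ) : Equiv.Perm ℤ :=
  ⟨tFun n i j, tFun n j i, fun x => tFun_comp n i j x, fun x => tFun_comp n j i x⟩

/-- The simple generator `s_i = t_{i, i+1} ∈ S̃_n`. -/
def sPerm (n : ℕ) (i : ℤ) : Equiv.Perm ℤ := tPerm n i (i + 1)

section Helpers

variable {n : ℕ} {z : Equiv.Perm ℤ}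

lemma zShift (hz1 : ∀ i : ℤ, z (i + n) = z i + n) : ∀ (m x : ℤ), z (x + m * n) = z x + m * n := by
  intro m
  induction m using Int.induction_on with
  | zero => intro x; simp
  | succ k ih =>
    intro x
    have h1 := hz1 (x + (k : ℤ) * n)
    have h2 := ih x
    have e : x + ((k : ℤ) + 1) * n = (x + (k : ℤ) * n) + n := by ring
    rw [e, h1, h2]; ring
  | pred k ih =>
    intro x
    have h1 := hz1 (x + (-(k : ℤ) - 1) * n)
    have e : x + (-(k : ℤ) - 1) * n + n = x + (-(k : ℤ)) * n := by ring
    rw [e] at h1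
    have h2 := ih x
    have : z (x + (-(k : ℤ) - 1) * n) = z x + (-(k : ℤ)) * n - n := by
      rw [← h2, h1]; ring
    rw [this]; ring

lemma rep_exists (hn : 0 < (n : ℤ)) (x : ℤ) :
    ∃ r q : ℤ, 1 ≤ r ∧ r ≤ (n : ℤ) ∧ x = r + q * n := by
  refine ⟨(x - 1) % n + 1, (x - 1) / n, ?_, ?_, ?_⟩
  · have := Int.emod_nonneg (x - 1) (by omega : (n : ℤ) ≠ 0); omega
  · have := Int.emod_lt_of_pos (x - 1) hn; omega
  · have h := Int.mul_ediv_add_emod (x - 1) (n : ℤ)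
    rw [mul_comm] at h; linarith

lemma sPerm_apply (n : ℕ) (i x : ℤ) :
    sPerm n i x = if (n : ℤ) ∣ x - i then x + 1 else if (n : ℤ) ∣ x - (i + 1) then x - 1 else x := by
  show tFun n i (i + 1) x = _
  unfold tFun
  split_ifs <;> ring

end Helpers

lemma prod_desc (n : ℕ) (hn : 2 ≤ n) :
    ∀ l : List ℤ,
      l.Pairwise (fun a b => ¬ a ≡ b [ZMOD (n : ℤ)] ∧ ¬ a ≡ b + 1 [ZMOD (n : ℤ)] ∧
        ¬ a ≡ b - 1 [ZMOD (n : ℤ)]) →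
      ∀ x : ℤ,
        (l.map (sPerm n)).prod x =
          if ∃ i ∈ l, (n : ℤ) ∣ x - i then x + 1
          else if ∃ i ∈ l, (n : ℤ) ∣ x - (i + 1) then x - 1 else x := by
  intro l
  induction l with
  | nil => intro _ x; simp
  | cons a t ih =>
    intro hl x
    obtain ⟨hhead, htail⟩ := List.pairwise_cons.mp hl
    have hy := ih htail x
    rw [List.map_cons, List.prod_cons, Equiv.Perm.mul_apply]
    have keydvd : ∀ u v : ℤ, (n : ℤ) ∣ x - u → (n : ℤ) ∣ x - v → (n : ℤ) ∣ v - u := by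
      intro u v hu hv
      rw [show v - u = (x - u) - (x - v) by ring]
      exact dvd_sub hu hv
    have hn1 : ¬ (n : ℤ) ∣ (1 : ℤ) := by
      intro h
      have := Int.le_of_dvd one_pos h
      omega
    by_cases hA : (n : ℤ) ∣ x - a
    · have hPt : ¬ ∃ i ∈ t, (n : ℤ) ∣ x - i := by
        rintro ⟨i, hi, hdi⟩
        exact (hhead i hi).1 (Int.modEq_iff_dvd.mpr (keydvd a i hA hdi))
      have hQt : ¬ ∃ i ∈ t, (n : ℤ) ∣ x - (i + 1) := by
        rintro ⟨i, hi, hdi⟩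
        exact (hhead i hi).2.1 (Int.modEq_iff_dvd.mpr (keydvd a (i + 1) hA hdi))
      rw [if_neg hPt, if_neg hQt] at hy
      rw [hy, sPerm_apply, if_pos hA, if_pos ⟨a, List.mem_cons_self, hA⟩]
    · by_cases hB : (n : ℤ) ∣ x - (a + 1)
      · have hPt : ¬ ∃ i ∈ t, (n : ℤ) ∣ x - i := by
          rintro ⟨i, hi, hdi⟩
          apply (hhead i hi).2.2
          apply Int.modEq_iff_dvd.mpr
          rw [show i - 1 - a = i - (a + 1) by ring]
          exact keydvd (a + 1) i hB hdi
        have hQt : ¬ ∃ i ∈ t, (n : ℤ) ∣ x - (i + 1) := by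
          rintro ⟨i, hi, hdi⟩
          apply (hhead i hi).1
          apply Int.modEq_iff_dvd.mpr
          rw [show i - a = (i + 1) - (a + 1) by ring]
          exact keydvd (a + 1) (i + 1) hB hdi
        rw [if_neg hPt, if_neg hQt] at hy
        have hP : ¬ ∃ i ∈ a :: t, (n : ℤ) ∣ x - i := by
          rintro ⟨i, hi, hdi⟩
          rcases List.mem_cons.mp hi with rfl | hi
          · exact hA hdi
          · exact hPt ⟨i, hi, hdi⟩
        rw [hy, sPerm_apply, if_neg hA, if_pos hB, if_neg hP,
          if_pos ⟨a, List.mem_cons_self, hB⟩]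
      · have hPiff : (∃ i ∈ a :: t, (n : ℤ) ∣ x - i) ↔ ∃ i ∈ t, (n : ℤ) ∣ x - i := by
          constructor
          · rintro ⟨i, hi, hdi⟩
            rcases List.mem_cons.mp hi with rfl | hi
            · exact absurd hdi hA
            · exact ⟨i, hi, hdi⟩
          · rintro ⟨i, hi, hdi⟩; exact ⟨i, List.mem_cons_of_mem a hi, hdi⟩
        have hQiff : (∃ i ∈ a :: t, (n : ℤ) ∣ x - (i + 1)) ↔ ∃ i ∈ t, (n : ℤ) ∣ x - (i + 1) := by
          constructor
          · rintro ⟨i, hi, hdi⟩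
            rcases List.mem_cons.mp hi with rfl | hi
            · exact absurd hdi hB
            · exact ⟨i, hi, hdi⟩
          · rintro ⟨i, hi, hdi⟩; exact ⟨i, List.mem_cons_of_mem a hi, hdi⟩
        by_cases hPt : ∃ i ∈ t, (n : ℤ) ∣ x - i
        · rw [if_pos hPt] at hy
          obtain ⟨i, hi, hdi⟩ := hPt
          rw [hy, sPerm_apply]
          have c1 : ¬ (n : ℤ) ∣ x + 1 - a := by
            intro h
            apply (hhead i hi).2.1
            apply Int.modEq_iff_dvd.mpr
            rw [show i + 1 - a = (x + 1 - a) - (x - i) by ring]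
            exact dvd_sub h hdi
          have c2 : ¬ (n : ℤ) ∣ x + 1 - (a + 1) := by
            intro h
            apply (hhead i hi).1
            apply Int.modEq_iff_dvd.mpr
            rw [show i - a = (x + 1 - (a + 1)) - (x - i) by ring]
            exact dvd_sub h hdi
          rw [if_neg c1, if_neg c2, if_pos (hPiff.mpr ⟨i, hi, hdi⟩)]
        · rw [if_neg hPt] at hy
          by_cases hQt : ∃ i ∈ t, (n : ℤ) ∣ x - (i + 1)
          · rw [if_pos hQt] at hy
            obtain ⟨i, hi, hdi⟩ := hQt
            rw [hy, sPerm_apply]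
            have c1 : ¬ (n : ℤ) ∣ x - 1 - a := by
              intro h
              apply (hhead i hi).1
              apply Int.modEq_iff_dvd.mpr
              rw [show i - a = (x - 1 - a) - (x - (i + 1)) by ring]
              exact dvd_sub h hdi
            have c2 : ¬ (n : ℤ) ∣ x - 1 - (a + 1) := by
              intro h
              apply (hhead i hi).2.2
              apply Int.modEq_iff_dvd.mpr
              rw [show i - 1 - a = (x - 1 - (a + 1)) - (x - (i + 1)) by ring]
              exact dvd_sub h hdi
            rw [if_neg c1, if_neg c2, if_neg (fun h => hPt (hPiff.mp h)),
              if_pos (hQiff.mpr ⟨i, hi, hdi⟩)]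
          · rw [if_neg hQt] at hy
            rw [hy, sPerm_apply, if_neg hA, if_neg hB,
              if_neg (fun h => hPt (hPiff.mp h)), if_neg (fun h => hQt (hQiff.mp h))]

lemma cond_symm {n : ℕ} : Symmetric (fun a b : ℤ => ¬ a ≡ b [ZMOD (n : ℤ)] ∧
    ¬ a ≡ b + 1 [ZMOD (n : ℤ)] ∧ ¬ a ≡ b - 1 [ZMOD (n : ℤ)]) := by
  rintro a b ⟨h1, h2, h3⟩
  refine ⟨fun h => h1 h.symm, fun h => ?_, fun h => ?_⟩
  · apply h3
    apply Int.modEq_iff_dvd.mpr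
    rw [show b - 1 - a = -(a + 1 - b) by ring]
    exact dvd_neg.mpr (Int.modEq_iff_dvd.mp h)
  · apply h2
    apply Int.modEq_iff_dvd.mpr
    rw [show b + 1 - a = -(a - 1 - b) by ring]
    exact dvd_neg.mpr (Int.modEq_iff_dvd.mp h)

lemma inv_iff_cyc (n : ℕ) (hn : 2 ≤ n) (l : List ℤ)
    (hl : l.Pairwise (fun a b => ¬ a ≡ b [ZMOD (n : ℤ)] ∧ ¬ a ≡ b + 1 [ZMOD (n : ℤ)] ∧
      ¬ a ≡ b - 1 [ZMOD (n : ℤ)])) (p : ℤ × ℤ) :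
    (1 ≤ p.1 ∧ p.1 ≤ (n : ℤ) ∧ p.1 < p.2 ∧
        (l.map (sPerm n)).prod p.2 < (l.map (sPerm n)).prod p.1) ↔
      (1 ≤ p.1 ∧ p.1 ≤ (n : ℤ) ∧ p.1 < p.2 ∧ (l.map (sPerm n)).prod p.1 = p.2) := by
  set w := (l.map (sPerm n)).prod with hw
  have hdesc := prod_desc n hn l hl
  have hn1 : ¬ (n : ℤ) ∣ (1 : ℤ) := by
    intro h; have := Int.le_of_dvd one_pos h; omega
  have hub : ∀ x, w x ≤ x + 1 := by intro x; rw [hdesc x]; split_ifs <;> omega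
  have hlb : ∀ x, x - 1 ≤ w x := by intro x; rw [hdesc x]; split_ifs <;> omega
  have hup : ∀ x, (∃ i ∈ l, (n : ℤ) ∣ x - i) → w x = x + 1 := by
    intro x h; rw [hdesc x, if_pos h]
  have hup' : ∀ x, w x = x + 1 → (∃ i ∈ l, (n : ℤ) ∣ x - i) := by
    intro x h
    by_contra hc
    rw [hdesc x, if_neg hc] at h
    split_ifs at h <;> omega
  letI : Std.Symm (fun a b : ℤ => ¬ a ≡ b [ZMOD (n : ℤ)] ∧ ¬ a ≡ b + 1 [ZMOD (n : ℤ)] ∧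
      ¬ a ≡ b - 1 [ZMOD (n : ℤ)]) := ⟨fun a b h => cond_symm (n := n) h⟩
  have hsym := List.Pairwise.forall hl
  have hplus : ∀ i ∈ l, ∀ j ∈ l, ¬ (n : ℤ) ∣ i + 1 - j := by
    intro i hi j hj h
    rcases eq_or_ne i j with rfl | hne
    · simp at h; exact hn1 h
    · exact (hsym hj hi hne.symm).2.1 (Int.modEq_iff_dvd.mpr h)
  have hdown : ∀ x, (∃ i ∈ l, (n : ℤ) ∣ x - i) → w (x + 1) = x := by
    rintro x ⟨i, hi, hdi⟩
    have hP : ¬ ∃ j ∈ l, (n : ℤ) ∣ x + 1 - j := by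
      rintro ⟨j, hj, hdj⟩
      apply hplus i hi j hj
      rw [show i + 1 - j = (x + 1 - j) - (x - i) by ring]
      exact dvd_sub hdj hdi
    have hQ : ∃ j ∈ l, (n : ℤ) ∣ x + 1 - (j + 1) := by
      exact ⟨i, hi, by rw [show x + 1 - (i + 1) = x - i by ring]; exact hdi⟩
    rw [hdesc (x + 1), if_neg hP, if_pos hQ]
    ring
  obtain ⟨a, b⟩ := p
  simp only
  constructor
  · rintro ⟨h1, h2, h3, h4⟩
    refine ⟨h1, h2, h3, ?_⟩
    have := hub a; have := hlb b; have := hub b; have := hlb a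
    linarith
  · rintro ⟨h1, h2, h3, h4⟩
    refine ⟨h1, h2, h3, ?_⟩
    have hb : b = a + 1 := by have := hub a; omega
    subst hb
    have := hdown a (hup' a h4)
    omega


/-- For `z ∈ Ĩ_n`, `ℓ(z) = ℓ'(z)` if and only if `z` is a product of commuting simple
generators, i.e. `z = s_{i₁} s_{i₂} ⋯ s_{i_l}` for distinct indices with
`i_j ≢ i_k ± 1 (mod n)` for all `j, k`. -/
theorem length_eq_absLength_iff (n : ℕ) (hn : 2 ≤ n) (z : Equiv.Perm ℤ)
    (hz : IsAffine n z) (hinv : ∀ x : ℤ, z (z x) = x) :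
    affLen n z = absLen n z ↔
      ∃ l : List ℤ, z = (l.map (sPerm n)).prod ∧
        l.Pairwise (fun a b => ¬ a ≡ b [ZMOD (n : ℤ)] ∧ ¬ a ≡ b + 1 [ZMOD (n : ℤ)] ∧
          ¬ a ≡ b - 1 [ZMOD (n : ℤ)]) := by
  classical
  obtain ⟨hz1, -⟩ := hz
  have hn0 : (0 : ℤ) < (n : ℤ) := by exact_mod_cast Nat.lt_of_lt_of_le Nat.zero_lt_two hn
  constructor
  · -- hard direction
    intro hcard
    set invSet : Set (ℤ × ℤ) :=
      {p : ℤ × ℤ | 1 ≤ p.1 ∧ p.1 ≤ (n : ℤ) ∧ p.1 < p.2 ∧ z p.2 < z p.1} with hinvSet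
    set cycSet : Set (ℤ × ℤ) :=
      {p : ℤ × ℤ | 1 ≤ p.1 ∧ p.1 ≤ (n : ℤ) ∧ p.1 < p.2 ∧ z p.1 = p.2} with hcycSet
    -- finiteness of the inversion set
    have hne : ((Finset.Icc (1 : ℤ) (n : ℤ)).image z).Nonempty := by
      refine ⟨z 1, Finset.mem_image_of_mem z ?_⟩
      rw [Finset.mem_Icc]; omega
    set M := ((Finset.Icc (1 : ℤ) (n : ℤ)).image z).max' hne with hM
    set m := ((Finset.Icc (1 : ℤ) (n : ℤ)).image z).min' hne with hm
    have hMle : ∀ r : ℤ, 1 ≤ r → r ≤ (n : ℤ) → z r ≤ M := by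
      intro r h1 h2
      exact Finset.le_max' _ _ (Finset.mem_image_of_mem z (Finset.mem_Icc.mpr ⟨h1, h2⟩))
    have hmle : ∀ r : ℤ, 1 ≤ r → r ≤ (n : ℤ) → m ≤ z r := by
      intro r h1 h2
      exact Finset.min'_le _ _ (Finset.mem_image_of_mem z (Finset.mem_Icc.mpr ⟨h1, h2⟩))
    have hfin : invSet.Finite := by
      apply Set.Finite.subset
        (Set.Finite.prod (Set.finite_Icc (1 : ℤ) (n : ℤ))
          (Set.finite_Icc (2 : ℤ) ((n : ℤ) + (M - m) * n)))
      rintro ⟨a, b⟩ hp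
      obtain ⟨h1, h2, h3, h4⟩ : 1 ≤ a ∧ a ≤ (n : ℤ) ∧ a < b ∧ z b < z a := hp
      obtain ⟨r, q, hr1, hr2, hx⟩ := rep_exists hn0 b
      have hq0 : 0 ≤ q := by
        by_contra hq
        have : q * (n : ℤ) ≤ (-1) * n :=
          mul_le_mul_of_nonneg_right (by omega) (le_of_lt hn0)
        linarith
      have hzb : z b = z r + q * n := by rw [hx]; exact zShift hz1 q r
      have hqM : q * (n : ℤ) ≤ M - m - 1 := by
        have := hMle a h1 h2
        have := hmle r hr1 hr2
        linarith
      have hqle : q ≤ M - m := by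
        have h5 : q * 1 ≤ q * (n : ℤ) := mul_le_mul_of_nonneg_left (by omega) hq0
        linarith
      have hble : b ≤ (n : ℤ) + (M - m) * n := by
        have : q * (n : ℤ) ≤ (M - m) * n := mul_le_mul_of_nonneg_right hqle (le_of_lt hn0)
        linarith
      exact ⟨⟨h1, h2⟩, ⟨by omega, hble⟩⟩
    have hsub : cycSet ⊆ invSet := by
      rintro ⟨a, b⟩ hp
      obtain ⟨h1, h2, h3, h4⟩ : 1 ≤ a ∧ a ≤ (n : ℤ) ∧ a < b ∧ z a = b := hp
      refine ⟨h1, h2, h3, ?_⟩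
      show z b < z a
      have : z b = a := by rw [← h4, hinv]
      omega
    have hfa : affLen n z = invSet.ncard := Nat.card_coe_set_eq invSet
    have hfc : absLen n z = cycSet.ncard := Nat.card_coe_set_eq cycSet
    have heq : cycSet = invSet :=
      Set.eq_of_subset_of_ncard_le hsub (by rw [← hfa, ← hfc, hcard]) hfin
    have key : ∀ a b : ℤ, 1 ≤ a → a ≤ (n : ℤ) → a < b → z b < z a → z a = b := by
      intro a b h1 h2 h3 h4
      have : (a, b) ∈ cycSet := heq ▸ (⟨h1, h2, h3, h4⟩ : (a, b) ∈ invSet)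
      exact this.2.2.2
    have key' : ∀ a b : ℤ, a < b → z b < z a → z a = b := by
      intro a b h3 h4
      obtain ⟨r, q, hr1, hr2, hx⟩ := rep_exists hn0 a
      have hza : z a = z r + q * n := by rw [hx]; exact zShift hz1 q r
      have hzb : z (b + (-q) * n) = z b + (-q) * n := zShift hz1 (-q) b
      have hk := key r (b + (-q) * n) hr1 hr2 (by linarith) (by linarith)
      linarith
    have hub : ∀ a : ℤ, z a ≤ a + 1 := by
      intro a
      by_contra hc
      push_neg at hc
      rcases lt_trichotomy (z (a + 1)) (z a) with h | h | h
      · have := key' a (a + 1) (by omega) h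
        omega
      · have := z.injective h
        omega
      · have h5 : z (z a) < z (a + 1) := by rw [hinv]; omega
        have := key' (a + 1) (z a) (by omega) h5
        omega
    have hlb : ∀ a : ℤ, a - 1 ≤ z a := by
      intro a
      by_contra hc
      push_neg at hc
      have h1 : z (z a) = a := hinv a
      have := hub (z a)
      omega
    -- construct the list
    set l : List ℤ :=
      ((Finset.Icc (1 : ℤ) (n : ℤ)).filter (fun i => z i = i + 1)).sort (· ≤ ·) with hldef
    have hmem : ∀ i : ℤ, i ∈ l ↔ (1 ≤ i ∧ i ≤ (n : ℤ) ∧ z i = i + 1) := by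
      intro i
      rw [hldef, Finset.mem_sort, Finset.mem_filter, Finset.mem_Icc]
      tauto
    have hnd : l.Nodup := Finset.sort_nodup _ _
    have hlpair : l.Pairwise (fun a b => ¬ a ≡ b [ZMOD (n : ℤ)] ∧ ¬ a ≡ b + 1 [ZMOD (n : ℤ)] ∧
        ¬ a ≡ b - 1 [ZMOD (n : ℤ)]) := by
      refine List.Pairwise.imp_of_mem ?_ hnd
      intro a b ha hb hab
      obtain ⟨ha1, ha2, hza⟩ := (hmem a).mp ha
      obtain ⟨hb1, hb2, hzb⟩ := (hmem b).mp hb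
      have hzb1 : z (b + 1) = b := by rw [← hzb, hinv]
      have hza1 : z (a + 1) = a := by rw [← hza, hinv]
      refine ⟨?_, ?_, ?_⟩
      · intro h
        have := Int.eq_zero_of_dvd_of_natAbs_lt_natAbs (Int.modEq_iff_dvd.mp h) (by omega)
        omega
      · intro h
        obtain ⟨k, hk⟩ := Int.modEq_iff_dvd.mp h
        -- b + 1 - a = n * k, so a = (b+1) + (-k)*n
        have e1 : z ((b + 1) + (-k) * n) = z (b + 1) + (-k) * n := zShift hz1 (-k) (b + 1)
        have e2 : (b + 1) + (-k) * (n : ℤ) = a := by linarith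
        rw [e2, hzb1, hza] at e1
        linarith
      · intro h
        obtain ⟨k, hk⟩ := Int.modEq_iff_dvd.mp h
        -- b - 1 - a = n * k, so a + 1 = b + (-k)*n
        have e1 : z (b + (-k) * n) = z b + (-k) * n := zShift hz1 (-k) b
        have e2 : b + (-k) * (n : ℤ) = a + 1 := by linarith
        rw [e2, hza1, hzb] at e1
        linarith
    refine ⟨l, ?_, hlpair⟩
    apply Equiv.ext
    intro x
    rw [prod_desc n hn l hlpair x]
    have htri : z x = x - 1 ∨ z x = x ∨ z x = x + 1 := by
      have := hub x; have := hlb x; omega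
    have hnotP : z x ≠ x + 1 → ¬ ∃ i ∈ l, (n : ℤ) ∣ x - i := by
      intro hne
      rintro ⟨i, hi, k, hk⟩
      obtain ⟨hi1, hi2, hzi⟩ := (hmem i).mp hi
      have e1 : z (i + k * n) = z i + k * n := zShift hz1 k i
      have e2 : i + k * (n : ℤ) = x := by linarith
      rw [e2, hzi] at e1
      exact hne (by linarith)
    rcases htri with hzx | hzx | hzx
    · -- z x = x - 1
      have hP : ¬ ∃ i ∈ l, (n : ℤ) ∣ x - i := hnotP (by omega)
      have hQ : ∃ i ∈ l, (n : ℤ) ∣ x - (i + 1) := by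
        obtain ⟨r, q, hr1, hr2, hx⟩ := rep_exists hn0 (x - 1)
        have e1 : z (x - 1) = z r + q * n := by rw [hx]; exact zShift hz1 q r
        have e2 : z (x - 1) = x := by rw [← hzx, hinv]
        have hzr : z r = r + 1 := by linarith
        refine ⟨r, (hmem r).mpr ⟨hr1, hr2, hzr⟩, ⟨q, by linarith⟩⟩
      rw [if_neg hP, if_pos hQ, hzx]
    · -- z x = x
      have hP : ¬ ∃ i ∈ l, (n : ℤ) ∣ x - i := hnotP (by omega)
      have hQ : ¬ ∃ i ∈ l, (n : ℤ) ∣ x - (i + 1) := by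
        rintro ⟨i, hi, k, hk⟩
        obtain ⟨hi1, hi2, hzi⟩ := (hmem i).mp hi
        have hzi1 : z (i + 1) = i := by rw [← hzi, hinv]
        have e1 : z ((i + 1) + k * n) = z (i + 1) + k * n := zShift hz1 k (i + 1)
        have e2 : (i + 1) + k * (n : ℤ) = x := by linarith
        rw [e2, hzi1] at e1
        linarith
      rw [if_neg hP, if_neg hQ, hzx]
    · -- z x = x + 1
      have hP : ∃ i ∈ l, (n : ℤ) ∣ x - i := by
        obtain ⟨r, q, hr1, hr2, hx⟩ := rep_exists hn0 x
        have e1 : z x = z r + q * n := by rw [hx]; exact zShift hz1 q r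
        have hzr : z r = r + 1 := by linarith
        refine ⟨r, (hmem r).mpr ⟨hr1, hr2, hzr⟩, ⟨q, by linarith⟩⟩
      rw [if_pos hP, hzx]
  · rintro ⟨l, hzl, hl⟩
    subst hzl
    exact Nat.card_congr (Equiv.subtypeEquivRight (inv_iff_cyc n hn l hl))
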